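/- Let p > 1 and let f : (0,∞)² → [0,∞) be measurable with f^p Lebesgue integrable on (0,∞)². Define R(x,y) = (1/(xy)) ∫₀^x ∫₀^y f(s,t) dt ds. Then ∫₀^∞ ∫₀^∞ R(x,y)^p dx dy ≤ (p/(p−1))^{2p} ∫₀^∞ ∫₀^∞ f(x,y)^p dx dy. -/

import Mathlib

open MeasureTheory Set
open scoped ENNReal

lemma measurable_rpow_const (r : ℝ) : Measurable (fun x : ℝ => x ^ r) :=
  measurable_of_continuousOn_compl_singleton 0 (fun x hx =>
    (Real.continuousAt_rpow_const x r (Or.inl hx)).continuousWithinAt)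

lemma lint_rpow_Ioc {x r : ℝ} (hx : 0 < x) (hr : -1 < r) :
    ∫⁻ t in Ioc (0:ℝ) x, ENNReal.ofReal (t ^ r) = ENNReal.ofReal (x ^ (r+1) / (r+1)) := by
  have hint : IntegrableOn (fun t : ℝ => t ^ r) (Ioc 0 x) := by
    have := (intervalIntegral.intervalIntegrable_rpow' (a := 0) (b := x) hr)
    simpa [intervalIntegrable_iff, uIoc_of_le hx.le] using this
  rw [← ofReal_integral_eq_lintegral_ofReal hint]
  · congr 1
    have := integral_rpow (a := 0) (b := x) (Or.inl hr)
    rw [intervalIntegral.integral_of_le hx.le] at this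
    rw [this, Real.zero_rpow (by linarith), sub_zero]
  · filter_upwards [ae_restrict_mem measurableSet_Ioc] with t ht
    exact Real.rpow_nonneg ht.1.le r

lemma lint_rpow_Ioi {t r : ℝ} (ht : 0 < t) (hr : r < -1) :
    ∫⁻ x in Ioi t, ENNReal.ofReal (x ^ r) = ENNReal.ofReal (-t ^ (r+1) / (r+1)) := by
  rw [← ofReal_integral_eq_lintegral_ofReal (integrableOn_Ioi_rpow_of_lt hr ht)]
  · rw [integral_Ioi_rpow_of_lt hr ht]
  · filter_upwards [ae_restrict_mem measurableSet_Ioi] with x hx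
    exact Real.rpow_nonneg (lt_trans ht hx).le r

lemma measurable_primitive {k : ℝ → ℝ≥0∞} (hk : Measurable k) :
    Measurable (fun x : ℝ => ∫⁻ t in Ioc (0:ℝ) x, k t) := by
  have heq : (fun x : ℝ => ∫⁻ t in Ioc (0:ℝ) x, k t)
      = fun x : ℝ => ∫⁻ t, (Ioc (0:ℝ) x).indicator k t := by
    ext x; rw [lintegral_indicator measurableSet_Ioc]
  rw [heq]
  have hset : MeasurableSet {w : ℝ × ℝ | 0 < w.2 ∧ w.2 ≤ w.1} :=
    (measurableSet_lt measurable_const measurable_snd).inter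
      (measurableSet_le measurable_snd measurable_fst)
  have : Measurable (fun z : ℝ × ℝ => (Ioc (0:ℝ) z.1).indicator k z.2) := by
    have : (fun z : ℝ × ℝ => (Ioc (0:ℝ) z.1).indicator k z.2)
        = {w : ℝ × ℝ | 0 < w.2 ∧ w.2 ≤ w.1}.indicator (fun w => k w.2) := by
      ext z; simp [Set.indicator_apply, Set.mem_Ioc, Set.mem_setOf_eq]
    rw [this]
    exact (hk.comp measurable_snd).indicator hset
  exact this.lintegral_prod_right'

/-- One-dimensional Hardy inequality, lintegral form. -/
lemma hardy1 {p : ℝ} (hp : 1 < p) (g : ℝ → ℝ≥0∞) (hg : Measurable g) :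
    ∫⁻ x in Ioi (0:ℝ), (ENNReal.ofReal (1/x) * ∫⁻ t in Ioc (0:ℝ) x, g t) ^ p
      ≤ ENNReal.ofReal ((p/(p-1)) ^ p) * ∫⁻ t in Ioi (0:ℝ), (g t) ^ p := by
  have hp0 : 0 < p := lt_trans one_pos hp
  have hp1 : 0 < p - 1 := by linarith
  set q : ℝ := p / (p - 1) with hqdef
  have hq0 : 0 < q := div_pos hp0 hp1
  have hpq : p.HolderConjugate q := Real.HolderConjugate.conjExponent hp
  set a : ℝ := (p-1)/p^2 with hadef
  set k : ℝ → ℝ≥0∞ := fun t => g t ^ p * ENNReal.ofReal (t ^ ((p-1)/p)) with hkdef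
  have hkmeas : Measurable k := (hg.pow_const _).mul (measurable_rpow_const _).ennreal_ofReal
  set b : ℝ := (1 - 2*p)/p with hbdef
  have hb : b < -1 := by
    rw [hbdef, div_lt_iff₀ hp0]; nlinarith
  have hb1 : b + 1 = (1-p)/p := by rw [hbdef]; field_simp; ring
  -- Step 1: pointwise Hölder bound
  have step1 : ∀ x : ℝ, 0 < x →
      (∫⁻ t in Ioc (0:ℝ) x, g t) ^ p
        ≤ (∫⁻ t in Ioc (0:ℝ) x, k t) * ENNReal.ofReal (q ^ (p-1) * x ^ ((p-1)^2/p)) := by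
    intro x hx
    set G : ℝ → ℝ≥0∞ := fun t => g t * ENNReal.ofReal (t ^ a) with hGdef
    set H : ℝ → ℝ≥0∞ := fun t => ENNReal.ofReal (t ^ (-a)) with hHdef
    have hG : Measurable G := hg.mul (measurable_rpow_const _).ennreal_ofReal
    have hH : Measurable H := (measurable_rpow_const _).ennreal_ofReal
    have hsplit : ∫⁻ t in Ioc (0:ℝ) x, g t = ∫⁻ t in Ioc (0:ℝ) x, (G * H) t := by
      refine (setLIntegral_congr_fun measurableSet_Ioc ?_).symm
      intro t ht
      simp only [Pi.mul_apply, hGdef, hHdef]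
      rw [mul_assoc, ← ENNReal.ofReal_mul (Real.rpow_nonneg ht.1.le _),
        ← Real.rpow_add ht.1, add_neg_cancel, Real.rpow_zero, ENNReal.ofReal_one, mul_one]
    have holder := ENNReal.lintegral_mul_le_Lp_mul_Lq (volume.restrict (Ioc (0:ℝ) x)) hpq
      hG.aemeasurable hH.aemeasurable
    rw [← hsplit] at holder
    have hT : ∫⁻ t in Ioc (0:ℝ) x, G t ^ p = ∫⁻ t in Ioc (0:ℝ) x, k t := by
      refine setLIntegral_congr_fun measurableSet_Ioc ?_
      intro t ht
      simp only [hGdef, hkdef]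
      rw [ENNReal.mul_rpow_of_nonneg _ _ hp0.le,
        ENNReal.ofReal_rpow_of_nonneg (Real.rpow_nonneg ht.1.le _) hp0.le,
        ← Real.rpow_mul ht.1.le]
      congr 3
      rw [hadef]; field_simp
    have hU : ∫⁻ t in Ioc (0:ℝ) x, H t ^ q = ENNReal.ofReal (q * x ^ ((p-1)/p)) := by
      have h1 : ∫⁻ t in Ioc (0:ℝ) x, H t ^ q
          = ∫⁻ t in Ioc (0:ℝ) x, ENNReal.ofReal (t ^ (-(1/p))) := by
        refine setLIntegral_congr_fun measurableSet_Ioc ?_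
        intro t ht
        simp only [hHdef]
        rw [ENNReal.ofReal_rpow_of_nonneg (Real.rpow_nonneg ht.1.le _) hq0.le,
          ← Real.rpow_mul ht.1.le]
        congr 2
        rw [hadef, hqdef]; field_simp
      have h2 : -1 < -(1/p) := by
        have : 1/p < 1 := by rw [div_lt_one hp0]; exact hp
        linarith
      rw [h1, lint_rpow_Ioc hx h2]
      have hc : -(1/p) + 1 = (p-1)/p := by field_simp; ring
      rw [hc]
      congr 1
      rw [div_eq_mul_inv, inv_div, mul_comm, hqdef]
    calc (∫⁻ t in Ioc (0:ℝ) x, g t) ^ p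
        ≤ ((∫⁻ t in Ioc (0:ℝ) x, G t ^ p) ^ (1/p)
            * (∫⁻ t in Ioc (0:ℝ) x, H t ^ q) ^ (1/q)) ^ p :=
          ENNReal.rpow_le_rpow holder hp0.le
      _ = (∫⁻ t in Ioc (0:ℝ) x, k t) * ENNReal.ofReal (q ^ (p-1) * x ^ ((p-1)^2/p)) := by
          rw [hT, hU, ENNReal.mul_rpow_of_nonneg _ _ hp0.le, ← ENNReal.rpow_mul,
            ← ENNReal.rpow_mul, one_div_mul_cancel hp0.ne', ENNReal.rpow_one]
          congr 1
          rw [ENNReal.ofReal_rpow_of_nonneg (by positivity) (by positivity :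
              (0:ℝ) ≤ 1/q * p)]
          congr 1
          rw [Real.mul_rpow hq0.le (Real.rpow_nonneg hx.le _),
            ← Real.rpow_mul hx.le]
          have : 1/q * p = p - 1 := by
            rw [one_div, ← div_eq_inv_mul]
            exact hpq.div_conj_eq_sub_one
          rw [this]
          congr 2
          ring
  -- the kernel for Tonelli
  set Φ : ℝ → ℝ → ℝ≥0∞ := fun x t =>
    if 0 < t ∧ t ≤ x then ENNReal.ofReal (x ^ b) * k t else 0 with hΦdef
  have hset : MeasurableSet {w : ℝ × ℝ | 0 < w.2 ∧ w.2 ≤ w.1} :=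
    (measurableSet_lt measurable_const measurable_snd).inter
      (measurableSet_le measurable_snd measurable_fst)
  have hΦmeas : Measurable (Function.uncurry Φ) := by
    have : Function.uncurry Φ = fun z : ℝ × ℝ =>
        {w : ℝ × ℝ | 0 < w.2 ∧ w.2 ≤ w.1}.indicator
          (fun w => ENNReal.ofReal (w.1 ^ b) * k w.2) z := by
      ext z; simp [Function.uncurry, hΦdef, Set.indicator_apply, Set.mem_setOf_eq]
    rw [this]
    exact (((measurable_rpow_const b).comp measurable_fst).ennreal_ofReal.mul
      (hkmeas.comp measurable_snd)).indicator hset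
  have claim1 : ∀ x : ℝ, ∫⁻ t in Ioi (0:ℝ), Φ x t
      = ENNReal.ofReal (x ^ b) * ∫⁻ t in Ioc (0:ℝ) x, k t := by
    intro x
    have : (fun t => Φ x t) = (Ioc (0:ℝ) x).indicator
        (fun t => ENNReal.ofReal (x ^ b) * k t) := by
      ext t; simp [hΦdef, Set.indicator_apply, Set.mem_Ioc]
    rw [this, lintegral_indicator measurableSet_Ioc,
      Measure.restrict_restrict measurableSet_Ioc,
      Set.inter_eq_left.mpr Set.Ioc_subset_Ioi_self,
      lintegral_const_mul _ hkmeas]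
  have claim2 : ∀ t : ℝ, 0 < t → ∫⁻ x in Ioi (0:ℝ), Φ x t
      = ENNReal.ofReal q * (g t ^ p) := by
    intro t ht
    have h1 : (fun x => Φ x t) = (Ici t).indicator
        (fun x => ENNReal.ofReal (x ^ b) * k t) := by
      ext x
      simp only [hΦdef, Set.indicator_apply, Set.mem_Ici]
      by_cases h : t ≤ x <;> simp [h, ht]
    rw [h1, lintegral_indicator measurableSet_Ici,
      Measure.restrict_restrict measurableSet_Ici,
      (Set.inter_eq_left.mpr (fun x hx => lt_of_lt_of_le ht hx) :
        Ici t ∩ Ioi (0:ℝ) = Ici t),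
      ← setLIntegral_congr (Ioi_ae_eq_Ici (a := t)),
      lintegral_mul_const _ (measurable_rpow_const b).ennreal_ofReal,
      lint_rpow_Ioi ht hb, hb1]
    have hq' : q = -((1-p)/p)⁻¹ := by
      have h1p : (1:ℝ) - p ≠ 0 := by intro h; linarith
      rw [hqdef]; field_simp; ring
    have h2 : -t ^ ((1-p)/p) / ((1-p)/p) = q * t ^ ((1-p)/p) := by
      rw [hq']; ring
    rw [h2, hkdef]
    simp only
    have hcomb : ENNReal.ofReal (t^((p-1)/p)) * ENNReal.ofReal (q * t^((1-p)/p))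
        = ENNReal.ofReal q := by
      rw [← ENNReal.ofReal_mul (Real.rpow_nonneg ht.le _)]
      congr 1
      rw [mul_comm, mul_assoc, ← Real.rpow_add ht]
      have h0 : (1-p)/p + (p-1)/p = 0 := by field_simp; ring
      rw [h0, Real.rpow_zero, mul_one]
    calc ENNReal.ofReal (q * t ^ ((1-p)/p)) * (g t ^ p * ENNReal.ofReal (t ^ ((p-1)/p)))
        = g t ^ p * (ENNReal.ofReal (t^((p-1)/p)) * ENNReal.ofReal (q * t^((1-p)/p))) := by
          ring
      _ = ENNReal.ofReal q * g t ^ p := by rw [hcomb]; exact mul_comm _ _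
  -- main chain
  calc ∫⁻ x in Ioi (0:ℝ), (ENNReal.ofReal (1/x) * ∫⁻ t in Ioc (0:ℝ) x, g t) ^ p
      ≤ ∫⁻ x in Ioi (0:ℝ), ENNReal.ofReal (q^(p-1)) * ∫⁻ t in Ioi (0:ℝ), Φ x t := by
        refine setLIntegral_mono' measurableSet_Ioi ?_
        intro x hx
        rw [Set.mem_Ioi] at hx
        rw [claim1 x, ENNReal.mul_rpow_of_nonneg _ _ hp0.le]
        calc ENNReal.ofReal (1/x) ^ p * (∫⁻ t in Ioc (0:ℝ) x, g t) ^ p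
            ≤ ENNReal.ofReal (1/x) ^ p *
              ((∫⁻ t in Ioc (0:ℝ) x, k t) * ENNReal.ofReal (q ^ (p-1) * x ^ ((p-1)^2/p))) :=
              mul_le_mul_right (step1 x hx) _
          _ = ENNReal.ofReal (q^(p-1)) *
              (ENNReal.ofReal (x ^ b) * ∫⁻ t in Ioc (0:ℝ) x, k t) := by
              rw [ENNReal.ofReal_rpow_of_nonneg (by positivity) hp0.le,
                ENNReal.ofReal_mul (by positivity : (0:ℝ) ≤ q^(p-1))]
              have h3 : (1/x) ^ p = x ^ (-p) := by
                rw [one_div, ← Real.rpow_neg_one x, ← Real.rpow_mul hx.le]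
                congr 1; ring
              have h4 : ENNReal.ofReal (x ^ (-p)) * ENNReal.ofReal (x ^ ((p-1)^2/p))
                  = ENNReal.ofReal (x ^ b) := by
                rw [← ENNReal.ofReal_mul (Real.rpow_nonneg hx.le _),
                  ← Real.rpow_add hx]
                congr 1
                rw [hbdef]; field_simp; ring
              rw [h3]
              calc ENNReal.ofReal (x ^ (-p)) *
                    ((∫⁻ t in Ioc (0:ℝ) x, k t) *
                      (ENNReal.ofReal (q ^ (p-1)) * ENNReal.ofReal (x ^ ((p-1)^2/p))))
                  = ENNReal.ofReal (q^(p-1)) *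
                    ((ENNReal.ofReal (x ^ (-p)) * ENNReal.ofReal (x ^ ((p-1)^2/p))) *
                      ∫⁻ t in Ioc (0:ℝ) x, k t) := by ring
                _ = ENNReal.ofReal (q^(p-1)) *
                    (ENNReal.ofReal (x ^ b) * ∫⁻ t in Ioc (0:ℝ) x, k t) := by rw [h4]
    _ = ENNReal.ofReal (q^(p-1)) * ∫⁻ x in Ioi (0:ℝ), ∫⁻ t in Ioi (0:ℝ), Φ x t := by
        have hmeas1 : Measurable (fun x : ℝ => ∫⁻ t in Ioi (0:ℝ), Φ x t) :=
          hΦmeas.lintegral_prod_right'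
        rw [lintegral_const_mul _ hmeas1]
    _ = ENNReal.ofReal (q^(p-1)) * ∫⁻ t in Ioi (0:ℝ), ∫⁻ x in Ioi (0:ℝ), Φ x t := by
        rw [lintegral_lintegral_swap hΦmeas.aemeasurable]
    _ = ENNReal.ofReal (q^(p-1)) * ∫⁻ t in Ioi (0:ℝ), ENNReal.ofReal q * (g t ^ p) := by
        congr 1
        refine setLIntegral_congr_fun measurableSet_Ioi ?_
        intro t ht
        exact claim2 t ht
    _ = ENNReal.ofReal ((p/(p-1)) ^ p) * ∫⁻ t in Ioi (0:ℝ), g t ^ p := by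
        rw [lintegral_const_mul _ (hg.pow_const _), ← mul_assoc,
          ← ENNReal.ofReal_mul (by positivity)]
        congr 2
        rw [← hqdef, ← Real.rpow_add_one hq0.ne' (p-1), sub_add_cancel]

lemma measurable_primitive2 {φ : ℝ → ℝ → ℝ≥0∞} (hφ : Measurable fun z : ℝ×ℝ => φ z.1 z.2) :
    Measurable (fun z : ℝ × ℝ => ∫⁻ s in Ioc (0:ℝ) z.1, φ s z.2) := by
  have heq : (fun z : ℝ × ℝ => ∫⁻ s in Ioc (0:ℝ) z.1, φ s z.2)
      = fun z : ℝ × ℝ => ∫⁻ s, (Ioc (0:ℝ) z.1).indicator (fun s => φ s z.2) s := by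
    ext z; rw [lintegral_indicator measurableSet_Ioc]
  rw [heq]
  have hset : MeasurableSet {w : (ℝ × ℝ) × ℝ | 0 < w.2 ∧ w.2 ≤ w.1.1} :=
    (measurableSet_lt measurable_const measurable_snd).inter
      (measurableSet_le measurable_snd (measurable_fst.comp measurable_fst))
  have hK : Measurable (fun w : (ℝ × ℝ) × ℝ =>
      {w : (ℝ × ℝ) × ℝ | 0 < w.2 ∧ w.2 ≤ w.1.1}.indicator
        (fun w => φ w.2 w.1.2) w) :=
    (hφ.comp (measurable_snd.prodMk (measurable_snd.comp measurable_fst))).indicator hset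
  have heq2 : (fun z : ℝ × ℝ => ∫⁻ s, (Ioc (0:ℝ) z.1).indicator (fun s => φ s z.2) s)
      = fun z : ℝ × ℝ => ∫⁻ s, {w : (ℝ × ℝ) × ℝ | 0 < w.2 ∧ w.2 ≤ w.1.1}.indicator
          (fun w => φ w.2 w.1.2) (z, s) := by
    ext z
    apply lintegral_congr
    intro s
    simp [Set.indicator_apply, Set.mem_Ioc, Set.mem_setOf_eq]
  rw [heq2]
  exact hK.lintegral_prod_right'

/-- Two-dimensional Hardy inequality, lintegral form. -/
lemma hardy2 {p : ℝ} (hp : 1 < p) (φ : ℝ → ℝ → ℝ≥0∞)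
    (hφ : Measurable (fun z : ℝ × ℝ => φ z.1 z.2)) :
    ∫⁻ x in Ioi (0:ℝ), ∫⁻ y in Ioi (0:ℝ),
        (ENNReal.ofReal (1/(x*y)) * ∫⁻ s in Ioc (0:ℝ) x, ∫⁻ t in Ioc (0:ℝ) y, φ s t) ^ p
      ≤ ENNReal.ofReal ((p/(p-1))^p) * (ENNReal.ofReal ((p/(p-1))^p) *
          ∫⁻ x in Ioi (0:ℝ), ∫⁻ y in Ioi (0:ℝ), φ x y ^ p) := by
  have hp0 : 0 < p := lt_trans one_pos hp
  set C : ℝ≥0∞ := ENNReal.ofReal ((p/(p-1))^p) with hCdef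
  set h : ℝ → ℝ → ℝ≥0∞ := fun x t =>
    ENNReal.ofReal (1/x) * ∫⁻ s in Ioc (0:ℝ) x, φ s t with hhdef
  have hinv1 : Measurable (fun z : ℝ × ℝ => ENNReal.ofReal (1/z.1)) := by
    simp only [one_div]
    exact (measurable_fst.inv).ennreal_ofReal
  have hhmeas : Measurable (fun z : ℝ × ℝ => h z.1 z.2) :=
    hinv1.mul (measurable_primitive2 hφ)
  have hswapmeas : Measurable (fun z : ℝ × ℝ => φ z.2 z.1) :=
    hφ.comp measurable_swap
  have stepA : ∀ x : ℝ, 0 < x → ∀ y : ℝ, 0 < y →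
      ENNReal.ofReal (1/(x*y)) * ∫⁻ s in Ioc (0:ℝ) x, ∫⁻ t in Ioc (0:ℝ) y, φ s t
        = ENNReal.ofReal (1/y) * ∫⁻ t in Ioc (0:ℝ) y, h x t := by
    intro x hx y hy
    have hswap : ∫⁻ s in Ioc (0:ℝ) x, ∫⁻ t in Ioc (0:ℝ) y, φ s t
        = ∫⁻ t in Ioc (0:ℝ) y, ∫⁻ s in Ioc (0:ℝ) x, φ s t :=
      lintegral_lintegral_swap hφ.aemeasurable
    rw [hswap]
    have hsplitc : ENNReal.ofReal (1/(x*y)) = ENNReal.ofReal (1/x) * ENNReal.ofReal (1/y) := by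
      rw [← ENNReal.ofReal_mul (by positivity)]
      congr 1
      field_simp
    have hQ : Measurable (fun t : ℝ => ∫⁻ s in Ioc (0:ℝ) x, φ s t) :=
      hswapmeas.lintegral_prod_right'
    rw [hsplitc, hhdef]
    simp only
    rw [lintegral_const_mul _ hQ]
    ring_nf
  have stepA' : ∀ x : ℝ, 0 < x →
      (∫⁻ y in Ioi (0:ℝ),
          (ENNReal.ofReal (1/(x*y)) * ∫⁻ s in Ioc (0:ℝ) x, ∫⁻ t in Ioc (0:ℝ) y, φ s t) ^ p)
        ≤ C * ∫⁻ y in Ioi (0:ℝ), h x y ^ p := by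
    intro x hx
    have hcongr : (∫⁻ y in Ioi (0:ℝ),
        (ENNReal.ofReal (1/(x*y)) * ∫⁻ s in Ioc (0:ℝ) x, ∫⁻ t in Ioc (0:ℝ) y, φ s t) ^ p)
        = ∫⁻ y in Ioi (0:ℝ), (ENNReal.ofReal (1/y) * ∫⁻ t in Ioc (0:ℝ) y, h x t) ^ p := by
      refine setLIntegral_congr_fun measurableSet_Ioi ?_
      intro y hy
      dsimp only
      rw [stepA x hx y hy]
    rw [hcongr]
    have hQ : Measurable (fun t : ℝ => ∫⁻ s in Ioc (0:ℝ) x, φ s t) :=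
      hswapmeas.lintegral_prod_right'
    exact hardy1 hp (h x) (measurable_const.mul hQ)
  have hH2 : Measurable (fun z : ℝ × ℝ => (h z.1 z.2) ^ p) := hhmeas.pow_const p
  have hmeas2 : Measurable (fun x : ℝ => ∫⁻ y in Ioi (0:ℝ), (h x y) ^ p) :=
    hH2.lintegral_prod_right'
  have hmeas3 : Measurable (fun y : ℝ => ∫⁻ x in Ioi (0:ℝ), (φ x y) ^ p) :=
    ((hφ.pow_const p).comp measurable_swap).lintegral_prod_right'
  calc ∫⁻ x in Ioi (0:ℝ), ∫⁻ y in Ioi (0:ℝ),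
        (ENNReal.ofReal (1/(x*y)) * ∫⁻ s in Ioc (0:ℝ) x, ∫⁻ t in Ioc (0:ℝ) y, φ s t) ^ p
      ≤ ∫⁻ x in Ioi (0:ℝ), C * ∫⁻ y in Ioi (0:ℝ), h x y ^ p :=
        setLIntegral_mono' measurableSet_Ioi (fun x hx => stepA' x hx)
    _ = C * ∫⁻ x in Ioi (0:ℝ), ∫⁻ y in Ioi (0:ℝ), h x y ^ p :=
        lintegral_const_mul _ hmeas2
    _ = C * ∫⁻ y in Ioi (0:ℝ), ∫⁻ x in Ioi (0:ℝ), h x y ^ p := by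
        rw [lintegral_lintegral_swap hH2.aemeasurable]
    _ ≤ C * ∫⁻ y in Ioi (0:ℝ), C * ∫⁻ x in Ioi (0:ℝ), φ x y ^ p := by
        refine mul_le_mul_right (setLIntegral_mono' measurableSet_Ioi ?_) _
        intro y hy
        exact hardy1 hp (fun s => φ s y) (hφ.comp (measurable_id.prodMk measurable_const))
    _ = C * (C * ∫⁻ y in Ioi (0:ℝ), ∫⁻ x in Ioi (0:ℝ), φ x y ^ p) := by
        rw [lintegral_const_mul _ hmeas3]
    _ = C * (C * ∫⁻ x in Ioi (0:ℝ), ∫⁻ y in Ioi (0:ℝ), φ x y ^ p) := by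
        rw [lintegral_lintegral_swap (f := fun y x => φ x y ^ p)
          (μ := volume.restrict (Ioi (0:ℝ))) (ν := volume.restrict (Ioi (0:ℝ)))
          ((hφ.pow_const p).comp measurable_swap).aemeasurable]

open MeasureTheory Set

set_option maxHeartbeats 2000000 in
/-- Classical two-dimensional Hardy inequality on `(0,∞)²`. -/
theorem classical_two_dim_hardy
    (p : ℝ) (hp : 1 < p)
    (f : ℝ → ℝ → ℝ)
    (hf : Measurable (fun q : ℝ × ℝ => f q.1 q.2))
    (hfnonneg : ∀ x y, 0 ≤ f x y)
    (hfp_int : IntegrableOn (fun q : ℝ × ℝ => (f q.1 q.2) ^ p)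
      (Ioi (0:ℝ) ×ˢ Ioi (0:ℝ)))
    (R : ℝ → ℝ → ℝ)
    (hR : ∀ x ∈ Ioi (0:ℝ), ∀ y ∈ Ioi (0:ℝ),
      R x y = (1 / (x * y)) * ∫ s in (0:ℝ)..x, ∫ t in (0:ℝ)..y, f s t) :
    (∫ x in Ioi (0:ℝ), ∫ y in Ioi (0:ℝ), (R x y) ^ p)
      ≤ (p / (p - 1)) ^ (2 * p) * ∫ x in Ioi (0:ℝ), ∫ y in Ioi (0:ℝ), (f x y) ^ p := by
  have hp0 : 0 < p := lt_trans one_pos hp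
  have hq0 : (0:ℝ) < p / (p-1) := div_pos hp0 (by linarith)
  set φ : ℝ → ℝ → ℝ≥0∞ := fun s t => ENNReal.ofReal (f s t) with hφdef
  have hφ : Measurable (fun z : ℝ × ℝ => φ z.1 z.2) := hf.ennreal_ofReal
  have hφp_eq : ∀ s t, φ s t ^ p = ENNReal.ofReal (f s t ^ p) := fun s t =>
    ENNReal.ofReal_rpow_of_nonneg (hfnonneg s t) hp0.le
  -- inner lintegrals
  have hφswap : Measurable (fun z : ℝ × ℝ => φ z.2 z.1) := hφ.comp measurable_swap
  have hA : Measurable (fun w : ℝ × ℝ => ∫⁻ t in Ioc (0:ℝ) w.1, φ w.2 t) :=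
    measurable_primitive2 (φ := fun t s => φ s t) hφswap
  have hinner1 : Measurable (fun z : ℝ × ℝ => ∫⁻ t in Ioc (0:ℝ) z.2, φ z.1 t) := by
    have heqc : (fun z : ℝ × ℝ => ∫⁻ t in Ioc (0:ℝ) z.2, φ z.1 t)
        = (fun w : ℝ × ℝ => ∫⁻ t in Ioc (0:ℝ) w.1, φ w.2 t) ∘ Prod.swap := rfl
    rw [heqc]
    exact hA.comp measurable_swap
  set inner1 : ℝ → ℝ → ℝ≥0∞ := fun s y => ∫⁻ t in Ioc (0:ℝ) y, φ s t with hinner1def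
  set inner2 : ℝ → ℝ → ℝ≥0∞ := fun x y =>
    ∫⁻ s in Ioc (0:ℝ) x, ENNReal.ofReal ((inner1 s y).toReal) with hinner2def
  have hinner2 : Measurable (fun z : ℝ × ℝ => inner2 z.1 z.2) :=
    measurable_primitive2 (φ := fun s y => ENNReal.ofReal ((inner1 s y).toReal))
      hinner1.ennreal_toReal.ennreal_ofReal
  -- pointwise value of R
  have hRval : ∀ x ∈ Ioi (0:ℝ), ∀ y ∈ Ioi (0:ℝ),
      R x y = (1 / (x * y)) * (inner2 x y).toReal := by
    intro x hx y hy
    rw [Set.mem_Ioi] at hx hy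
    have h1 : ∀ s : ℝ, ∫ t in (0:ℝ)..y, f s t = (inner1 s y).toReal := by
      intro s
      rw [intervalIntegral.integral_of_le hy.le,
        integral_eq_lintegral_of_nonneg_ae (ae_of_all _ fun t => hfnonneg s t)
          ((hf.comp (measurable_const.prodMk measurable_id)).aestronglyMeasurable)]
    have h2 : ∫ s in (0:ℝ)..x, ∫ t in (0:ℝ)..y, f s t = (inner2 x y).toReal := by
      simp_rw [h1]
      have hms : AEStronglyMeasurable (fun s : ℝ => (inner1 s y).toReal)
          (volume.restrict (Ioc (0:ℝ) x)) :=
        ((hinner1.comp (measurable_id.prodMk measurable_const)).ennreal_toReal).aestronglyMeasurable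
      rw [intervalIntegral.integral_of_le hx.le,
        integral_eq_lintegral_of_nonneg_ae (ae_of_all _ fun s => ENNReal.toReal_nonneg) hms]
    rw [hR x (Set.mem_Ioi.mpr hx) y (Set.mem_Ioi.mpr hy), h2]
  -- the real integrand and its ENNReal bound
  set ρ : ℝ → ℝ → ℝ := fun x y => ((1 / (x * y)) * (inner2 x y).toReal) ^ p with hρdef
  have hρmeas : Measurable (fun z : ℝ × ℝ => ρ z.1 z.2) := by
    apply (measurable_rpow_const p).comp
    exact (measurable_const.div (measurable_fst.mul measurable_snd)).mul
      hinner2.ennreal_toReal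
  have keybound : ∀ x : ℝ, 0 < x → ∀ y : ℝ, 0 < y →
      ENNReal.ofReal (ρ x y)
        ≤ (ENNReal.ofReal (1/(x*y)) *
            ∫⁻ s in Ioc (0:ℝ) x, ∫⁻ t in Ioc (0:ℝ) y, φ s t) ^ p := by
    intro x hx y hy
    have hxy : (0:ℝ) ≤ 1/(x*y) := by positivity
    have e1 : ENNReal.ofReal (ρ x y)
        = (ENNReal.ofReal (1/(x*y)) * ENNReal.ofReal ((inner2 x y).toReal)) ^ p := by
      rw [hρdef]
      simp only
      rw [← ENNReal.ofReal_mul hxy,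
        ENNReal.ofReal_rpow_of_nonneg (mul_nonneg hxy ENNReal.toReal_nonneg) hp0.le]
    rw [e1]
    refine ENNReal.rpow_le_rpow (mul_le_mul_right ?_ _) hp0.le
    calc ENNReal.ofReal ((inner2 x y).toReal) ≤ inner2 x y := ENNReal.ofReal_toReal_le
      _ ≤ ∫⁻ s in Ioc (0:ℝ) x, ∫⁻ t in Ioc (0:ℝ) y, φ s t :=
        lintegral_mono fun s => ENNReal.ofReal_toReal_le
  -- total mass
  set M : ℝ≥0∞ := ∫⁻ x in Ioi (0:ℝ), ∫⁻ y in Ioi (0:ℝ), φ x y ^ p with hMdef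
  have hMprod : M = ∫⁻ z in (Ioi (0:ℝ)) ×ˢ (Ioi (0:ℝ)), φ z.1 z.2 ^ p := by
    rw [hMdef, Measure.volume_eq_prod, ← Measure.prod_restrict,
      lintegral_prod _ ((hφ.pow_const p).aemeasurable)]
  have hMlt : M < ⊤ := by
    rw [hMprod]
    have h2 := hfp_int.2
    rw [hasFiniteIntegral_iff_ofReal (f := fun q : ℝ × ℝ => f q.1 q.2 ^ p)
      (μ := volume.restrict (Ioi (0:ℝ) ×ˢ Ioi (0:ℝ)))
      (ae_of_all _ fun z : ℝ × ℝ => Real.rpow_nonneg (hfnonneg z.1 z.2) p)] at h2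
    refine lt_of_le_of_lt (le_of_eq (lintegral_congr fun z => ?_)) h2
    rw [hφp_eq]
  -- RHS computation
  have hNmeas : Measurable (fun x : ℝ => ∫⁻ y in Ioi (0:ℝ), φ x y ^ p) :=
    (hφ.pow_const p).lintegral_prod_right'
  have hRHS : ∫ x in Ioi (0:ℝ), ∫ y in Ioi (0:ℝ), (f x y) ^ p = M.toReal := by
    have hstep : ∀ x : ℝ, ∫ y in Ioi (0:ℝ), (f x y) ^ p
        = (∫⁻ y in Ioi (0:ℝ), φ x y ^ p).toReal := by
      intro x
      rw [integral_eq_lintegral_of_nonneg_ae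
        (ae_of_all _ fun y => Real.rpow_nonneg (hfnonneg x y) p)
        (((measurable_rpow_const p).comp
          (hf.comp (measurable_const.prodMk measurable_id))).aestronglyMeasurable)]
      congr 1
      exact lintegral_congr fun y => (hφp_eq x y).symm
    rw [integral_congr_ae (ae_of_all _ hstep)]
    rw [integral_eq_lintegral_of_nonneg_ae (ae_of_all _ fun x => ENNReal.toReal_nonneg)
      (hNmeas.ennreal_toReal.aestronglyMeasurable)]
    congr 1
    have hae : ∀ᵐ x ∂(volume.restrict (Ioi (0:ℝ))),
        (∫⁻ y in Ioi (0:ℝ), φ x y ^ p) < ⊤ := ae_lt_top hNmeas (by rw [← hMdef]; exact hMlt.ne)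
    rw [← hMdef] at *
    refine lintegral_congr_ae ?_
    filter_upwards [hae] with x hxlt
    rw [ENNReal.ofReal_toReal hxlt.ne]
  -- LHS computation and bound
  set J : ℝ → ℝ≥0∞ := fun x => ∫⁻ y in Ioi (0:ℝ), ENNReal.ofReal (ρ x y) with hJdef
  have hJmeas : Measurable J := (hρmeas.ennreal_ofReal).lintegral_prod_right'
  have hLHS1 : ∫ x in Ioi (0:ℝ), ∫ y in Ioi (0:ℝ), (R x y) ^ p
      = ∫ x in Ioi (0:ℝ), (J x).toReal := by
    refine setIntegral_congr_fun measurableSet_Ioi ?_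
    intro x hx
    have hxpos : (0:ℝ) < x := hx
    have e1 : ∫ y in Ioi (0:ℝ), (R x y) ^ p = ∫ y in Ioi (0:ℝ), ρ x y := by
      refine setIntegral_congr_fun measurableSet_Ioi ?_
      intro y hy
      show R x y ^ p = ρ x y
      rw [hRval x hx y hy]
    show (∫ y in Ioi (0:ℝ), (R x y) ^ p) = (J x).toReal
    rw [e1, integral_eq_lintegral_of_nonneg_ae ?_ ?_]
    · refine (ae_restrict_iff' measurableSet_Ioi).2 (ae_of_all _ ?_)
      intro y hy
      have : (0:ℝ) ≤ 1/(x*y) := by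
        have : (0:ℝ) < y := hy
        positivity
      exact Real.rpow_nonneg (mul_nonneg this ENNReal.toReal_nonneg) p
    · exact (hρmeas.comp (measurable_const.prodMk measurable_id)).aestronglyMeasurable
  have hLHS2 : ∫ x in Ioi (0:ℝ), (J x).toReal
      = (∫⁻ x in Ioi (0:ℝ), ENNReal.ofReal ((J x).toReal)).toReal :=
    integral_eq_lintegral_of_nonneg_ae (ae_of_all _ fun x => ENNReal.toReal_nonneg)
      (hJmeas.ennreal_toReal.aestronglyMeasurable)
  set C : ℝ≥0∞ := ENNReal.ofReal ((p/(p-1))^p) with hCdef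
  have hfinal : (∫⁻ x in Ioi (0:ℝ), ENNReal.ofReal ((J x).toReal)) ≤ C * (C * M) := by
    calc ∫⁻ x in Ioi (0:ℝ), ENNReal.ofReal ((J x).toReal)
        ≤ ∫⁻ x in Ioi (0:ℝ), J x := lintegral_mono fun x => ENNReal.ofReal_toReal_le
      _ ≤ ∫⁻ x in Ioi (0:ℝ), ∫⁻ y in Ioi (0:ℝ),
            (ENNReal.ofReal (1/(x*y)) *
              ∫⁻ s in Ioc (0:ℝ) x, ∫⁻ t in Ioc (0:ℝ) y, φ s t) ^ p := by
          refine setLIntegral_mono' measurableSet_Ioi ?_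
          intro x hx
          refine setLIntegral_mono' measurableSet_Ioi ?_
          intro y hy
          exact keybound x hx y hy
      _ ≤ C * (C * M) := hardy2 hp φ hφ
  have hCM_ne : C * (C * M) ≠ ⊤ :=
    ENNReal.mul_ne_top ENNReal.ofReal_ne_top
      (ENNReal.mul_ne_top ENNReal.ofReal_ne_top hMlt.ne)
  have hle : (∫ x in Ioi (0:ℝ), ∫ y in Ioi (0:ℝ), (R x y) ^ p) ≤ (C * (C * M)).toReal := by
    rw [hLHS1, hLHS2]
    exact ENNReal.toReal_mono hCM_ne hfinal
  refine le_trans hle (le_of_eq ?_)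
  rw [ENNReal.toReal_mul, ENNReal.toReal_mul, ENNReal.toReal_ofReal (by positivity),
    hRHS, ← mul_assoc]
  congr 1
  rw [two_mul, Real.rpow_add hq0]
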